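/- For every 1 ≤ i ≤ n: q^{(K)}(x^{g_{i;K}}) = μ^{(K)}(x_i), where g_{i;K} is the i-th column of G_K. Equivalently, q^{(K)}(x^{g_{i;K}}) = x^{g_{i;K}}·F_{i;t_K}(ŷ, z), where F_{i;t_K} is the F-polynomial of the cluster variable x_{i;t_K} of the generalized cluster algebra with principal coefficients (so that μ^{(K)}(x_i) = x^{g_{i;K}}·F_{i;t_K}(ŷ, z) is the separation formula). -/

import Mathlib

noncomputable section

/-- Variables of the ambient field of a generalized cluster algebra of rank `n` with
mutation degrees `r`: cluster variables `x_i`, coefficients `y_i`, and `z_{i,s}` for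
`1 ≤ s ≤ r_i - 1` (encoded by `Fin (r i - 1)`, the variable `z i t` standing for
`z_{i, t+1}`). -/
inductive GVar (n : ℕ) (r : Fin n → ℕ) : Type where
  | x : Fin n → GVar n r
  | y : Fin n → GVar n r
  | z : (i : Fin n) → Fin (r i - 1) → GVar n r

/-- The ambient field: rational functions over `ℚ` in the variables `GVar n r`. -/
abbrev GF (n : ℕ) (r : Fin n → ℕ) : Type := FractionRing (MvPolynomial (GVar n r) ℚ)

/-- The variable `x_i` as an element of the field `GF n r`. -/
def Xv {n : ℕ} {r : Fin n → ℕ} (i : Fin n) : GF n r :=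
  algebraMap (MvPolynomial (GVar n r) ℚ) (GF n r) (MvPolynomial.X (GVar.x i))

/-- The variable `y_i` as an element of the field `GF n r`. -/
def Yv {n : ℕ} {r : Fin n → ℕ} (i : Fin n) : GF n r :=
  algebraMap (MvPolynomial (GVar n r) ℚ) (GF n r) (MvPolynomial.X (GVar.y i))

/-- The variable `z_{i,s+1}` (for `s : Fin (r i - 1)`) as an element of `GF n r`. -/
def Zv {n : ℕ} {r : Fin n → ℕ} (i : Fin n) (s : Fin (r i - 1)) : GF n r :=
  algebraMap (MvPolynomial (GVar n r) ℚ) (GF n r) (MvPolynomial.X (GVar.z i s))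

/-- A rational constant as an element of `GF n r`. -/
def Qc {n : ℕ} {r : Fin n → ℕ} (a : ℚ) : GF n r :=
  algebraMap (MvPolynomial (GVar n r) ℚ) (GF n r) (MvPolynomial.C a)

/-- `z_{i,s}` for `0 ≤ s ≤ r i`, with the convention `z_{i,0} = z_{i,r_i} = 1`. -/
def Zc {n : ℕ} (r : Fin n → ℕ) (i : Fin n) (s : ℕ) : GF n r :=
  if h : 0 < s ∧ s < r i then Zv i ⟨s - 1, by omega⟩ else 1

/-- `x^v = ∏ x_i^{v_i}` for `v ∈ ℤ^n`. -/
def xpow {n : ℕ} (r : Fin n → ℕ) (v : Fin n → ℤ) : GF n r :=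
  ∏ i, Xv (r := r) i ^ v i

/-- `ŷ_i = y_i·∏_j x_j^{b_{ji}}`. -/
def yhat {n : ℕ} (r : Fin n → ℕ) (B : Matrix (Fin n) (Fin n) ℤ) (i : Fin n) : GF n r :=
  Yv i * ∏ j, Xv (r := r) j ^ B j i

/-- `ŷ^v = ∏ ŷ_i^{v_i}` for `v ∈ ℤ^n`. -/
def yhatpow {n : ℕ} (r : Fin n → ℕ) (B : Matrix (Fin n) (Fin n) ℤ) (v : Fin n → ℤ) :
    GF n r :=
  ∏ i, yhat r B i ^ v i


namespace Stmt11Aux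

variable {n : ℕ} {r : Fin n → ℕ}

lemma Xv_ne_zero (i : Fin n) : (Xv (r := r) i) ≠ 0 := by
  intro h
  have hinj := IsFractionRing.injective (MvPolynomial (GVar n r) ℚ) (GF n r)
  have : (MvPolynomial.X (GVar.x i) : MvPolynomial (GVar n r) ℚ) = 0 := by
    apply hinj; simpa [Xv] using h
  exact MvPolynomial.X_ne_zero _ this

lemma Yv_ne_zero (i : Fin n) : (Yv (r := r) i) ≠ 0 := by
  intro h
  have hinj := IsFractionRing.injective (MvPolynomial (GVar n r) ℚ) (GF n r)
  have : (MvPolynomial.X (GVar.y i) : MvPolynomial (GVar n r) ℚ) = 0 := by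
    apply hinj; simpa [Yv] using h
  exact MvPolynomial.X_ne_zero _ this

lemma xpow_ne_zero (v : Fin n → ℤ) : xpow r v ≠ 0 := by
  rw [xpow]
  exact Finset.prod_ne_zero_iff.2 fun i _ => zpow_ne_zero _ (Xv_ne_zero i)

lemma prod_zpow_sum {F : Type*} [Field F] {a : F} (ha : a ≠ 0) {ι : Type*} (s : Finset ι)
    (f : ι → ℤ) : ∏ i ∈ s, a ^ f i = a ^ (∑ i ∈ s, f i) := by
  classical
  induction s using Finset.induction with
  | empty => simp
  | insert _ _ h ih => rw [Finset.prod_insert h, Finset.sum_insert h, zpow_add₀ ha, ih]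

lemma xpow_congr {v w : Fin n → ℤ} (h : ∀ m, v m = w m) : xpow r v = xpow r w := by
  rw [xpow, xpow]; exact Finset.prod_congr rfl fun m _ => by rw [h m]

lemma xpow_add (v w : Fin n → ℤ) :
    xpow r (fun m => v m + w m) = xpow r v * xpow r w := by
  rw [xpow, xpow, xpow, ← Finset.prod_mul_distrib]
  exact Finset.prod_congr rfl fun m _ => zpow_add₀ (Xv_ne_zero m) _ _

lemma xpow_neg (v : Fin n → ℤ) : xpow r (fun m => -(v m)) = (xpow r v)⁻¹ := by
  rw [xpow, xpow, ← Finset.prod_inv_distrib]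
  exact Finset.prod_congr rfl fun m _ => zpow_neg _ _

lemma xpow_zpow (v : Fin n → ℤ) (c : ℤ) : xpow r v ^ c = xpow r (fun m => c * v m) := by
  rw [xpow, xpow, ← Finset.prod_zpow]
  exact Finset.prod_congr rfl fun m _ => by rw [← zpow_mul, mul_comm]

lemma xpow_pow (v : Fin n → ℤ) (c : ℕ) :
    xpow r v ^ c = xpow r (fun m => (c : ℤ) * v m) := by
  rw [← zpow_natCast (xpow r v) c, xpow_zpow]

lemma prod_xpow (g : Fin n → Fin n → ℤ) (e : Fin n → ℤ) :
    ∏ l, xpow r (g l) ^ e l = xpow r (fun m => ∑ l, g l m * e l) := by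
  calc ∏ l, xpow r (g l) ^ e l = ∏ l, ∏ m, Xv (r := r) m ^ (g l m * e l) := by
        refine Finset.prod_congr rfl fun l _ => ?_
        rw [xpow, ← Finset.prod_zpow]
        exact Finset.prod_congr rfl fun m _ => by rw [← zpow_mul]
    _ = ∏ m, ∏ l, Xv (r := r) m ^ (g l m * e l) := Finset.prod_comm
    _ = xpow r (fun m => ∑ l, g l m * e l) := by
        rw [xpow]
        exact Finset.prod_congr rfl fun m _ => prod_zpow_sum (Xv_ne_zero m) _ _

lemma sum_eq_except₁ {k : Fin n} (u v w : Fin n → ℤ) (h : ∀ l, l ≠ k → u l = v l) :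
    ∑ l, u l * w l = (∑ l, v l * w l) + (u k - v k) * w k := by
  have h1 : ∑ l, (u l * w l - v l * w l) = (u k - v k) * w k := by
    rw [Finset.sum_eq_single k]
    · ring
    · intro l _ hl; rw [h l hl]; ring
    · intro habs; exact absurd (Finset.mem_univ k) habs
  have h2 : ∑ l, (u l * w l - v l * w l) = (∑ l, u l * w l) - ∑ l, v l * w l :=
    Finset.sum_sub_distrib _ _
  rw [h2] at h1; linarith

lemma sum_eq_except₂ {k : Fin n} (u v w : Fin n → ℤ) (h : ∀ l, l ≠ k → u l = v l) :
    ∑ l, w l * u l = (∑ l, w l * v l) + w k * (u k - v k) := by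
  have h1 : ∑ l, (w l * u l - w l * v l) = w k * (u k - v k) := by
    rw [Finset.sum_eq_single k]
    · ring
    · intro l _ hl; rw [h l hl]; ring
    · intro habs; exact absurd (Finset.mem_univ k) habs
  have h2 : ∑ l, (w l * u l - w l * v l) = (∑ l, w l * u l) - ∑ l, w l * v l :=
    Finset.sum_sub_distrib _ _
  rw [h2] at h1; linarith

lemma hom_xpow (f : GF n r →+* GF n r) (P : GF n r) (hP : P ≠ 0) (h : Fin n → ℤ)
    (hx : ∀ i, f (Xv i) = Xv i * P ^ (-(h i))) (v : Fin n → ℤ) :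
    f (xpow r v) = xpow r v * P ^ (-(∑ m, h m * v m)) := by
  rw [xpow, map_prod]
  calc ∏ m, f (Xv (r := r) m ^ v m)
      = ∏ m, (Xv (r := r) m ^ v m * P ^ (-(h m) * v m)) := by
        refine Finset.prod_congr rfl fun m _ => ?_
        rw [map_zpow₀, hx m, mul_zpow, ← zpow_mul]
    _ = (∏ m, Xv (r := r) m ^ v m) * ∏ m, P ^ (-(h m) * v m) := Finset.prod_mul_distrib
    _ = xpow r v * P ^ (-(∑ m, h m * v m)) := by
        have hs : (∑ m, -(h m) * v m) = -(∑ m, h m * v m) := by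
          rw [← Finset.sum_neg_distrib]
          exact Finset.sum_congr rfl fun m _ => by ring
        rw [xpow, prod_zpow_sum hP, hs]

lemma max_neg_eq (x : ℤ) : max (-x) 0 = max x 0 - x := by
  rcases le_total x 0 with h | h
  · rw [max_eq_left (by linarith), max_eq_right h]; ring
  · rw [max_eq_right (by linarith), max_eq_left h]; ring

end Stmt11Aux
open Stmt11Aux in
/-- **separation formula.** For every `1 ≤ i ≤ n`,
`q^{(K)}(x^{g_{i;K}}) = μ^{(K)}(x_i)`; equivalently, with the `F`-polynomial
`F_{i;t_K}(ŷ,z) = x^{-g_{i;K}}·μ^{(K)}(x_i)`, one has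
`μ^{(K)}(x_i) = x^{g_{i;K}}·F_{i;t_K}(ŷ,z)`. -/
theorem stmt_11 (n K : ℕ) (hn : 1 ≤ n) (r : Fin n → ℕ) (hr : ∀ i, 0 < r i)
    (B₀ : Matrix (Fin n) (Fin n) ℤ)
    (D₀ : Fin n → ℤ) (hD₀ : ∀ i, 0 < D₀ i)
    (hskew : ∀ i j, D₀ i * (r i : ℤ) * B₀ i j = -(D₀ j * (r j : ℤ) * B₀ j i))
    (idx : ℕ → Fin n) (ε : ℕ → ℤ)
    (hε : ∀ j < K, ε (j + 1) = 1 ∨ ε (j + 1) = -1)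
    (B C G : ℕ → Matrix (Fin n) (Fin n) ℤ)
    (hB0 : B 0 = B₀) (hC0 : C 0 = 1) (hG0 : G 0 = 1)
    -- at each step the c-vector is nonzero and sign-coherent with common sign ε_j
    (hcv : ∀ j < K, (∃ l, C j l (idx (j + 1)) ≠ 0) ∧
      ∀ l, 0 ≤ ε (j + 1) * C j l (idx (j + 1)))
    (hB : ∀ j < K, ∀ (a b : Fin n),
      B (j + 1) a b =
        if a = idx (j + 1) ∨ b = idx (j + 1) then -(B j a b)
        else B j a b + (r (idx (j + 1)) : ℤ) *
          (max (-(B j a (idx (j + 1)))) 0 * B j (idx (j + 1)) b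
            + B j a (idx (j + 1)) * max (B j (idx (j + 1)) b) 0))
    (hC : ∀ j < K, ∀ (a b : Fin n),
      C (j + 1) a b =
        if b = idx (j + 1) then -(C j a b)
        else C j a b + (r (idx (j + 1)) : ℤ) *
          (C j a (idx (j + 1)) * max (ε (j + 1) * B j (idx (j + 1)) b) 0
            + max (-(ε (j + 1) * C j a (idx (j + 1)))) 0 * B j (idx (j + 1)) b))
    (hG : ∀ j < K, ∀ (l i : Fin n),
      G (j + 1) l i =
        if i = idx (j + 1) then
          -(G j l i) + (r (idx (j + 1)) : ℤ) *
            ∑ p, max (-(ε (j + 1) * B j p (idx (j + 1)))) 0 * G j l p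
        else G j l i)
    -- tropical duality
    (hdual : ∀ j ≤ K, ∀ (i l : Fin n),
      ∑ m, G j m i * (D₀ m * (r m : ℤ)) * C j m l =
        if i = l then D₀ l * (r l : ℤ) else 0)
    -- the rational numbers h_{i,j} = (e_i, d_{(j)}·c_j)_{D₀R} are integers
    (hfun : ℕ → Fin n → ℤ)
    (hfunint : ∀ j < K, ∀ i,
      hfun (j + 1) i * (D₀ (idx (j + 1)) * (r (idx (j + 1)) : ℤ)) =
        D₀ i * (r i : ℤ) * C j i (idx (j + 1)))
    (μ : ℕ → (GF n r →+* GF n r))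
    (hμ0 : ∀ j < K, ∀ a : ℚ, μ (j + 1) (Qc a) = Qc a)
    (hμy : ∀ j < K, ∀ i, μ (j + 1) (Yv i) = Yv i)
    (hμz : ∀ j < K, ∀ i s, μ (j + 1) (Zv i s) = Zv i s)
    (hμx : ∀ j < K, ∀ i, i ≠ idx (j + 1) → μ (j + 1) (Xv i) = Xv i)
    (hμxk : ∀ j < K, μ (j + 1) (Xv (idx (j + 1))) =
      (Xv (idx (j + 1)) : GF n r)⁻¹ *
        (∏ l, Xv (r := r) l ^ max (-(ε (j + 1) * B j l (idx (j + 1)))) 0) ^ (r (idx (j + 1))) *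
        ∑ s ∈ Finset.range (r (idx (j + 1)) + 1),
          Zc r (idx (j + 1)) s *
            ((∏ l, Yv (r := r) l ^ C j l (idx (j + 1))) *
              ∏ l, Xv (r := r) l ^ B j l (idx (j + 1))) ^ (ε (j + 1) * s))
    (M : ℕ → (GF n r →+* GF n r))
    (hM0 : M 0 = RingHom.id _)
    (hM : ∀ j < K, M (j + 1) = (M j).comp (μ (j + 1)))
    (q : ℕ → (GF n r →+* GF n r))
    (hq0 : ∀ j < K, ∀ a : ℚ, q (j + 1) (Qc a) = Qc a)
    (hqy : ∀ j < K, ∀ i, q (j + 1) (Yv i) = Yv i)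
    (hqz : ∀ j < K, ∀ i s, q (j + 1) (Zv i s) = Zv i s)
    (hqx : ∀ j < K, ∀ i, q (j + 1) (Xv i) =
      Xv i * (∑ s ∈ Finset.range (r (idx (j + 1)) + 1),
        Zc r (idx (j + 1)) s *
          yhatpow r B₀ (fun m => ε (j + 1) * C j m (idx (j + 1))) ^ s) ^ (-(hfun (j + 1) i)))
    (Q : ℕ → (GF n r →+* GF n r))
    (hQ0 : Q 0 = RingHom.id _)
    (hQ : ∀ j < K, Q (j + 1) = (Q j).comp (q (j + 1)))
    : ∀ i, Q K (xpow r (fun l => G K l i)) = M K (Xv i) := by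
  classical
  have hdRpos : ∀ m : Fin n, (0:ℤ) < D₀ m * (r m : ℤ) := fun m =>
    mul_pos (hD₀ m) (by exact_mod_cast hr m)
  -- Step A: skew-symmetry of D₀R·B_j persists
  have skew : ∀ j ≤ K, ∀ a b, D₀ a * (r a : ℤ) * B j a b = -(D₀ b * (r b : ℤ) * B j b a) := by
    intro j
    induction j with
    | zero => intro _ a b; rw [hB0]; exact hskew a b
    | succ j ihs =>
      intro hj a b
      have hjK : j < K := hj
      have ihj := ihs hjK.le
      rw [hB j hjK a b, hB j hjK b a]
      by_cases hab : a = idx (j+1) ∨ b = idx (j+1)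
      · rw [if_pos hab, if_pos (Or.symm hab)]
        linear_combination -ihj a b
      · push_neg at hab
        rw [if_neg (by tauto), if_neg (by tauto)]
        have f3 := ihj a (idx (j+1))
        have f4 := ihj b (idx (j+1))
        have f5 := ihj a b
        have f1 : D₀ a * (r a : ℤ) * max (-(B j a (idx (j+1)))) 0
            = D₀ (idx (j+1)) * (r (idx (j+1)) : ℤ) * max (B j (idx (j+1)) a) 0 := by
          rw [mul_max_of_nonneg _ _ (le_of_lt (hdRpos a)),
            mul_max_of_nonneg _ _ (le_of_lt (hdRpos (idx (j+1)))), mul_zero, mul_zero]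
          congr 1
          linear_combination -f3
        have f2 : D₀ b * (r b : ℤ) * max (-(B j b (idx (j+1)))) 0
            = D₀ (idx (j+1)) * (r (idx (j+1)) : ℤ) * max (B j (idx (j+1)) b) 0 := by
          rw [mul_max_of_nonneg _ _ (le_of_lt (hdRpos b)),
            mul_max_of_nonneg _ _ (le_of_lt (hdRpos (idx (j+1)))), mul_zero, mul_zero]
          congr 1
          linear_combination -f4
        linear_combination f5 + ((r (idx (j+1)) : ℤ) * B j (idx (j+1)) b) * f1
          + ((r (idx (j+1)) : ℤ) * max (B j (idx (j+1)) b) 0) * f3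
          + ((r (idx (j+1)) : ℤ) * B j (idx (j+1)) a) * f2
          + ((r (idx (j+1)) : ℤ) * max (B j (idx (j+1)) a) 0) * f4
  -- Step B: diagonal of B_j vanishes
  have Bkk : ∀ j ≤ K, ∀ p, B j p p = 0 := by
    intro j hj p
    have h := skew j hj p p
    have h0 : D₀ p * (r p : ℤ) * B j p p = 0 := by linarith
    rcases mul_eq_zero.1 h0 with h1 | h1
    · exact absurd h1 (ne_of_gt (hdRpos p))
    · exact h1
  -- Step C: B₀ C_j = G_j B_j
  have GBC : ∀ j ≤ K, ∀ a b, (∑ m, B₀ a m * C j m b) = ∑ l, G j a l * B j l b := by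
    intro j
    induction j with
    | zero =>
      intro _ a b
      rw [hC0, hG0, hB0]
      simp [Matrix.one_apply]
    | succ j ihs =>
      intro hj a b
      have hjK : j < K := hj
      have ihj := ihs hjK.le
      have hBkk : B j (idx (j+1)) (idx (j+1)) = 0 := Bkk j hjK.le _
      by_cases hb : b = idx (j+1)
      · subst hb
        have hstep : ∑ l, G (j+1) a l * B j l (idx (j+1))
            = (∑ l, G j a l * B j l (idx (j+1)))
              + (G (j+1) a (idx (j+1)) - G j a (idx (j+1))) * B j (idx (j+1)) (idx (j+1)) :=
          sum_eq_except₁ _ _ _ (fun l hl => by rw [hG j hjK a l, if_neg hl])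
        have hL : ∑ m, B₀ a m * C (j+1) m (idx (j+1))
            = -(∑ m, B₀ a m * C j m (idx (j+1))) := by
          rw [← Finset.sum_neg_distrib]
          refine Finset.sum_congr rfl fun m _ => ?_
          rw [hC j hjK m (idx (j+1)), if_pos rfl]; ring
        have hR : ∑ l, G (j+1) a l * B (j+1) l (idx (j+1))
            = -(∑ l, G j a l * B j l (idx (j+1))) := by
          calc ∑ l, G (j+1) a l * B (j+1) l (idx (j+1))
              = ∑ l, -(G (j+1) a l * B j l (idx (j+1))) := by
                refine Finset.sum_congr rfl fun l _ => ?_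
                rw [hB j hjK l (idx (j+1)), if_pos (Or.inr rfl)]; ring
            _ = -(∑ l, G (j+1) a l * B j l (idx (j+1))) := Finset.sum_neg_distrib _
            _ = -(∑ l, G j a l * B j l (idx (j+1))) := by rw [hstep, hBkk]; ring
        rw [hL, hR, ihj a (idx (j+1))]
      · have hcoh := (hcv j hjK).2
        have hL : ∑ m, B₀ a m * C (j+1) m b
            = (∑ m, B₀ a m * C j m b)
              + ((r (idx (j+1)) : ℤ) * max (ε (j+1) * B j (idx (j+1)) b) 0)
                * ∑ m, B₀ a m * C j m (idx (j+1)) := by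
          rw [Finset.mul_sum, ← Finset.sum_add_distrib]
          refine Finset.sum_congr rfl fun m _ => ?_
          rw [hC j hjK m b, if_neg hb, max_eq_right (neg_nonpos.2 (hcoh m))]
          ring
        set φ : Fin n → ℤ := fun l => B j l b + (r (idx (j+1)) : ℤ)
          * (max (-(B j l (idx (j+1)))) 0 * B j (idx (j+1)) b
            + B j l (idx (j+1)) * max (B j (idx (j+1)) b) 0) with hφ
        have hφk : φ (idx (j+1)) = B j (idx (j+1)) b := by
          simp only [hφ, hBkk]; simp
        have hBk1 : B (j+1) (idx (j+1)) b = -(B j (idx (j+1)) b) := by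
          rw [hB j hjK _ b, if_pos (Or.inl rfl)]
        have hGk1 : G (j+1) a (idx (j+1)) = -(G j a (idx (j+1)))
            + (r (idx (j+1)) : ℤ) * ∑ p, max (-(ε (j+1) * B j p (idx (j+1)))) 0 * G j a p := by
          rw [hG j hjK a (idx (j+1)), if_pos rfl]
        have step1 : ∑ l, G (j+1) a l * B (j+1) l b
            = (∑ l, G j a l * B (j+1) l b)
              + (G (j+1) a (idx (j+1)) - G j a (idx (j+1))) * B (j+1) (idx (j+1)) b :=
          sum_eq_except₁ _ _ _ (fun l hl => by rw [hG j hjK a l, if_neg hl])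
        have step2 : ∑ l, G j a l * B (j+1) l b
            = (∑ l, G j a l * φ l)
              + G j a (idx (j+1)) * (B (j+1) (idx (j+1)) b - φ (idx (j+1))) :=
          sum_eq_except₂ _ _ _ (fun l hl => by
            rw [hB j hjK l b, if_neg (by tauto)])
        have step3 : ∑ l, G j a l * φ l
            = (∑ l, G j a l * B j l b)
              + ((r (idx (j+1)) : ℤ) * B j (idx (j+1)) b)
                * (∑ l, G j a l * max (-(B j l (idx (j+1)))) 0)
              + ((r (idx (j+1)) : ℤ) * max (B j (idx (j+1)) b) 0)
                * (∑ l, G j a l * B j l (idx (j+1))) := by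
          rw [Finset.mul_sum, Finset.mul_sum, ← Finset.sum_add_distrib, ← Finset.sum_add_distrib]
          refine Finset.sum_congr rfl fun l _ => ?_
          simp only [hφ]; ring
        rw [hL, step1, step2, step3, hGk1, hBk1, hφk]
        rcases hε j hjK with he | he
        · rw [he]
          simp only [one_mul]
          have hcomm : ∑ p, max (-(B j p (idx (j+1)))) 0 * G j a p
              = ∑ l, G j a l * max (-(B j l (idx (j+1)))) 0 :=
            Finset.sum_congr rfl fun p _ => mul_comm _ _
          rw [hcomm]
          linear_combination ihj a b
            + ((r (idx (j+1)) : ℤ) * max (B j (idx (j+1)) b) 0) * ihj a (idx (j+1))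
        · rw [he]
          simp only [neg_mul, one_mul, neg_neg]
          have hSig2 : ∑ p, max (B j p (idx (j+1))) 0 * G j a p
              = (∑ l, G j a l * max (-(B j l (idx (j+1)))) 0)
                + ∑ l, G j a l * B j l (idx (j+1)) := by
            rw [← Finset.sum_add_distrib]
            refine Finset.sum_congr rfl fun p _ => ?_
            have hm : max (B j p (idx (j+1))) 0
                = max (-(B j p (idx (j+1)))) 0 + B j p (idx (j+1)) := by
              rw [max_neg_eq]; ring
            linear_combination (G j a p) * hm
          rw [hSig2, max_neg_eq (B j (idx (j+1)) b)]
          linear_combination ihj a b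
            + ((r (idx (j+1)) : ℤ) * (max (B j (idx (j+1)) b) 0 - B j (idx (j+1)) b))
              * ihj a (idx (j+1))
  -- Step D: M and Q fix coefficients
  have Mfix : ∀ j ≤ K, (∀ i, M j (Yv i) = Yv i) ∧ (∀ i s, M j (Zv i s) = Zv i s) := by
    intro j
    induction j with
    | zero => intro _; rw [hM0]; exact ⟨fun i => rfl, fun i s => rfl⟩
    | succ j ihs =>
      intro hj
      have hjK : j < K := hj
      obtain ⟨ihy, ihz⟩ := ihs hjK.le
      rw [hM j hjK]
      exact ⟨fun i => by rw [RingHom.comp_apply, hμy j hjK, ihy],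
        fun i s => by rw [RingHom.comp_apply, hμz j hjK, ihz]⟩
  have Qfix : ∀ j ≤ K, (∀ i, Q j (Yv i) = Yv i) ∧ (∀ i s, Q j (Zv i s) = Zv i s) := by
    intro j
    induction j with
    | zero => intro _; rw [hQ0]; exact ⟨fun i => rfl, fun i s => rfl⟩
    | succ j ihs =>
      intro hj
      have hjK : j < K := hj
      obtain ⟨ihy, ihz⟩ := ihs hjK.le
      rw [hQ j hjK]
      exact ⟨fun i => by rw [RingHom.comp_apply, hqy j hjK, ihy],
        fun i s => by rw [RingHom.comp_apply, hqz j hjK, ihz]⟩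
  have MZc : ∀ j ≤ K, ∀ (i : Fin n) (s : ℕ), M j (Zc r i s) = Zc r i s := by
    intro j hj i s
    by_cases h : 0 < s ∧ s < r i
    · rw [Zc, dif_pos h, (Mfix j hj).2]
    · rw [Zc, dif_neg h, map_one]
  have QZc : ∀ j ≤ K, ∀ (i : Fin n) (s : ℕ), Q j (Zc r i s) = Zc r i s := by
    intro j hj i s
    by_cases h : 0 < s ∧ s < r i
    · rw [Zc, dif_pos h, (Qfix j hj).2]
    · rw [Zc, dif_neg h, map_one]
  -- Main induction
  have main : ∀ j ≤ K, ∀ i, Q j (xpow r (fun l => G j l i)) = M j (Xv i) := by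
    intro j
    induction j with
    | zero =>
      intro _ i
      rw [hQ0, hM0, RingHom.id_apply, RingHom.id_apply, hG0, xpow]
      rw [Finset.prod_eq_single i]
      · rw [Matrix.one_apply_eq, zpow_one]
      · intro l _ hl
        rw [Matrix.one_apply_ne hl, zpow_zero]
      · intro h; exact absurd (Finset.mem_univ i) h
    | succ j ihs =>
      intro hj i
      have hjK : j < K := hj
      have ih := ihs hjK.le
      have hPne : (∑ s ∈ Finset.range (r (idx (j+1)) + 1),
          Zc r (idx (j+1)) s
            * (yhatpow r B₀ fun m => ε (j+1) * C j m (idx (j+1))) ^ s) ≠ 0 := by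
        obtain ⟨l0, hl0⟩ := (hcv j hjK).1
        have hh : hfun (j+1) l0 ≠ 0 := by
          intro h0
          have hfi := hfunint j hjK l0
          rw [h0, zero_mul] at hfi
          rcases mul_eq_zero.1 hfi.symm with h1 | h1
          · exact absurd h1 (ne_of_gt (hdRpos l0))
          · exact hl0 h1
        intro hP0
        have hq1 := hqx j hjK l0
        rw [hP0, zero_zpow _ (neg_ne_zero.2 hh), mul_zero] at hq1
        exact Xv_ne_zero l0 ((q (j+1)).injective (by rw [hq1, map_zero]))
      have hqX := hom_xpow (q (j+1)) _ hPne (hfun (j+1)) (fun i => hqx j hjK i)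
      by_cases hik : i = idx (j+1)
      · subst hik
        -- exponent is -1
        have hsum1 : ∑ m, hfun (j+1) m * G (j+1) m (idx (j+1)) = -1 := by
          have hCk : ∀ m, C j m (idx (j+1)) = -(C (j+1) m (idx (j+1))) := fun m => by
            rw [hC j hjK m (idx (j+1)), if_pos rfl, neg_neg]
          have hmul : (∑ m, hfun (j+1) m * G (j+1) m (idx (j+1)))
                * (D₀ (idx (j+1)) * (r (idx (j+1)) : ℤ))
              = -1 * (D₀ (idx (j+1)) * (r (idx (j+1)) : ℤ)) := by
            rw [Finset.sum_mul]
            have hterm : ∀ m ∈ Finset.univ,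
                hfun (j+1) m * G (j+1) m (idx (j+1)) * (D₀ (idx (j+1)) * (r (idx (j+1)) : ℤ))
                  = -(G (j+1) m (idx (j+1)) * (D₀ m * (r m : ℤ)) * C (j+1) m (idx (j+1))) := by
              intro m _
              have h1 := hfunint j hjK m
              rw [hCk m] at h1
              linear_combination (G (j+1) m (idx (j+1))) * h1
            rw [Finset.sum_congr rfl hterm, Finset.sum_neg_distrib,
              hdual (j+1) hj (idx (j+1)) (idx (j+1)), if_pos rfl]
            ring
          exact mul_right_cancel₀ (ne_of_gt (hdRpos (idx (j+1)))) hmul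
        -- key monomial identity
        have keyA : xpow r (fun l => G (j+1) l (idx (j+1)))
            = (xpow r fun m => G j m (idx (j+1)))⁻¹
              * (∏ l, xpow r (fun m => G j m l)
                  ^ max (-(ε (j+1) * B j l (idx (j+1)))) 0) ^ (r (idx (j+1))) := by
          rw [prod_xpow, xpow_pow, ← xpow_neg, ← xpow_add]
          refine xpow_congr fun m => ?_
          rw [hG j hjK m (idx (j+1)), if_pos rfl]
          have hs : ∑ l, G j m l * max (-(ε (j+1) * B j l (idx (j+1)))) 0
              = ∑ p, max (-(ε (j+1) * B j p (idx (j+1)))) 0 * G j m p :=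
            Finset.sum_congr rfl fun p _ => mul_comm _ _
          rw [hs]
        have hV : ((∏ l, Yv (r := r) l ^ C j l (idx (j+1)))
              * ∏ l, xpow r (fun m => G j m l) ^ B j l (idx (j+1))) ^ (ε (j+1))
            = yhatpow r B₀ fun m => ε (j+1) * C j m (idx (j+1)) := by
          have hL : ((∏ l, Yv (r := r) l ^ C j l (idx (j+1)))
                * ∏ l, xpow r (fun m => G j m l) ^ B j l (idx (j+1))) ^ (ε (j+1))
              = (∏ l, Yv (r := r) l ^ (ε (j+1) * C j l (idx (j+1))))
                * xpow r (fun m => ε (j+1) * ∑ l, G j m l * B j l (idx (j+1))) := by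
            rw [prod_xpow, mul_zpow, ← Finset.prod_zpow, xpow_zpow]
            congr 1
            exact Finset.prod_congr rfl fun l _ => by rw [← zpow_mul, mul_comm]
          have hR : (yhatpow r B₀ fun m => ε (j+1) * C j m (idx (j+1)))
              = (∏ l, Yv (r := r) l ^ (ε (j+1) * C j l (idx (j+1))))
                * xpow r (fun m => ε (j+1) * ∑ l, G j m l * B j l (idx (j+1))) := by
            calc (yhatpow r B₀ fun m => ε (j+1) * C j m (idx (j+1)))
                = ∏ i, (Yv (r := r) i * xpow r (fun m => B₀ m i))
                    ^ (ε (j+1) * C j i (idx (j+1))) := by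
                  rw [yhatpow]
                  exact Finset.prod_congr rfl fun i _ => by rw [yhat, xpow]
              _ = ∏ i, ((Yv (r := r) i) ^ (ε (j+1) * C j i (idx (j+1)))
                    * xpow r (fun m => B₀ m i) ^ (ε (j+1) * C j i (idx (j+1)))) :=
                  Finset.prod_congr rfl fun i _ => mul_zpow _ _ _
              _ = (∏ i, Yv (r := r) i ^ (ε (j+1) * C j i (idx (j+1))))
                    * ∏ i, xpow r (fun m => B₀ m i) ^ (ε (j+1) * C j i (idx (j+1))) :=
                  Finset.prod_mul_distrib
              _ = (∏ l, Yv (r := r) l ^ (ε (j+1) * C j l (idx (j+1))))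
                    * xpow r (fun m => ∑ i, B₀ m i * (ε (j+1) * C j i (idx (j+1)))) := by
                  rw [prod_xpow]
              _ = (∏ l, Yv (r := r) l ^ (ε (j+1) * C j l (idx (j+1))))
                    * xpow r (fun m => ε (j+1) * ∑ l, G j m l * B j l (idx (j+1))) := by
                  congr 1
                  refine xpow_congr fun m => ?_
                  calc ∑ i, B₀ m i * (ε (j+1) * C j i (idx (j+1)))
                      = ε (j+1) * ∑ i, B₀ m i * C j i (idx (j+1)) := by
                        rw [Finset.mul_sum]
                        exact Finset.sum_congr rfl fun i _ => by ring
                    _ = ε (j+1) * ∑ l, G j m l * B j l (idx (j+1)) := by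
                        rw [GBC j hjK.le m (idx (j+1))]
          rw [hL, hR]
        have keyB : (∑ s ∈ Finset.range (r (idx (j+1)) + 1),
              Zc r (idx (j+1)) s
                * (yhatpow r B₀ fun m => ε (j+1) * C j m (idx (j+1))) ^ s)
            = ∑ s ∈ Finset.range (r (idx (j+1)) + 1),
                Zc r (idx (j+1)) s
                  * ((∏ l, Yv (r := r) l ^ C j l (idx (j+1)))
                    * ∏ l, xpow r (fun m => G j m l) ^ B j l (idx (j+1)))
                      ^ (ε (j+1) * (s : ℤ)) := by
          refine Finset.sum_congr rfl fun s _ => ?_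
          congr 1
          rw [zpow_mul, hV, zpow_natCast]
        calc Q (j+1) (xpow r fun l => G (j+1) l (idx (j+1)))
            = Q j (q (j+1) (xpow r fun l => G (j+1) l (idx (j+1)))) := by
              rw [hQ j hjK, RingHom.comp_apply]
          _ = Q j ((xpow r fun l => G (j+1) l (idx (j+1)))
                * (∑ s ∈ Finset.range (r (idx (j+1)) + 1),
                    Zc r (idx (j+1)) s
                      * (yhatpow r B₀ fun m => ε (j+1) * C j m (idx (j+1))) ^ s)) := by
              rw [hqX (fun l => G (j+1) l (idx (j+1))), hsum1, neg_neg, zpow_one]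
          _ = Q j (((xpow r fun m => G j m (idx (j+1)))⁻¹
                * (∏ l, xpow r (fun m => G j m l)
                    ^ max (-(ε (j+1) * B j l (idx (j+1)))) 0) ^ (r (idx (j+1))))
                * ∑ s ∈ Finset.range (r (idx (j+1)) + 1),
                    Zc r (idx (j+1)) s
                      * ((∏ l, Yv (r := r) l ^ C j l (idx (j+1)))
                        * ∏ l, xpow r (fun m => G j m l) ^ B j l (idx (j+1)))
                          ^ (ε (j+1) * (s : ℤ))) := by
              rw [keyA, keyB]
          _ = M (j+1) (Xv (idx (j+1))) := by
              rw [hM j hjK, RingHom.comp_apply, hμxk j hjK]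
              simp only [map_mul, map_inv₀, map_pow, map_sum, map_prod, map_zpow₀,
                (Qfix j hjK.le).1, QZc j hjK.le, (Mfix j hjK.le).1, MZc j hjK.le, ih]
      · -- i ≠ idx (j+1)
        have hGcol : (fun l => G (j+1) l i) = (fun l => G j l i) :=
          funext fun l => by rw [hG j hjK l i, if_neg hik]
        have hsum0 : ∑ m, hfun (j+1) m * G (j+1) m i = 0 := by
          have hmul : (∑ m, hfun (j+1) m * G (j+1) m i)
                * (D₀ (idx (j+1)) * (r (idx (j+1)) : ℤ)) = 0 := by
            rw [Finset.sum_mul]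
            have hterm : ∀ m ∈ Finset.univ,
                hfun (j+1) m * G (j+1) m i * (D₀ (idx (j+1)) * (r (idx (j+1)) : ℤ))
                  = G j m i * (D₀ m * (r m : ℤ)) * C j m (idx (j+1)) := by
              intro m _
              rw [hG j hjK m i, if_neg hik]
              linear_combination (G j m i) * hfunint j hjK m
            rw [Finset.sum_congr rfl hterm, hdual j hjK.le i (idx (j+1)), if_neg hik]
          rcases mul_eq_zero.1 hmul with h1 | h1
          · exact h1
          · exact absurd h1 (ne_of_gt (hdRpos _))
        calc Q (j+1) (xpow r fun l => G (j+1) l i)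
            = Q j (q (j+1) (xpow r fun l => G (j+1) l i)) := by
              rw [hQ j hjK, RingHom.comp_apply]
          _ = Q j (xpow r fun l => G j l i) := by
              rw [hqX (fun l => G (j+1) l i), hsum0, neg_zero, zpow_zero, mul_one, hGcol]
          _ = M j (Xv i) := ih i
          _ = M (j+1) (Xv i) := by
              rw [hM j hjK, RingHom.comp_apply, hμx j hjK i hik]
  exact fun i => main K le_rfl i
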